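/- arXiv:2308.06703 — 2 statements merged into one kernel-verified Lean document; each statement's English description precedes it below -/
import Mathlib

section
/- Let d ≥ 1, let σ²: Fin d → ℝ≥0, let μ be the product measure on ℝ^d whose i-th coordinate is the centered real Gaussian measure with variance σᵢ², let ε ≥ 0, and let w, w* ∈ ℝ^d satisfy σᵢ²·(wᵢ − wᵢ*) = 0 for every i (i.e., w is a standard risk minimizer: it agrees with w* on every coordinate with σᵢ² > 0). Then the standard risk of w is 0 and the adversarial risk of w equals (ε²/2)·‖w‖₂². -/
open MeasureTheory ProbabilityTheory
open scoped NNReal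

/-- The standard risk under the product Gaussian measure. -/
noncomputable def stdRisk (d : ℕ) (σsq : Fin d → ℝ≥0) (wstar : Fin d → ℝ)
    (w : Fin d → ℝ) : ℝ :=
  ∫ x : Fin d → ℝ, (1/2) * (∑ i, x i * (w i - wstar i))^2
      ∂(Measure.pi fun i => gaussianReal 0 (σsq i))

/-- The adversarial risk under the product Gaussian measure. -/
noncomputable def advRisk (d : ℕ) (σsq : Fin d → ℝ≥0) (wstar : Fin d → ℝ) (ε : ℝ)
    (w : Fin d → ℝ) : ℝ :=
  ∫ x : Fin d → ℝ,
      sSup ((fun (Δ : Fin d → ℝ) =>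
          (1/2) * ((∑ i, x i * (w i - wstar i)) + ∑ i, Δ i * w i)^2) ''
        {Δ | Real.sqrt (∑ i, (Δ i)^2) ≤ ε})
      ∂(Measure.pi fun i => gaussianReal 0 (σsq i))

lemma sup_helper (d : ℕ) (ε : ℝ) (hε : 0 ≤ ε) (w : Fin d → ℝ) :
    IsGreatest ((fun (Δ : Fin d → ℝ) =>
        (1/2 : ℝ) * ((0:ℝ) + ∑ i, Δ i * w i)^2) ''
      {Δ | Real.sqrt (∑ i, (Δ i)^2) ≤ ε})
      (ε^2 / 2 * ∑ i, (w i)^2) := by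
  have hwsq : (0:ℝ) ≤ ∑ i, (w i)^2 := Finset.sum_nonneg fun i _ => sq_nonneg _
  constructor
  · -- membership
    rcases eq_or_lt_of_le hwsq with h0 | hpos
    · -- all w i = 0
      refine ⟨0, by simp [hε], ?_⟩
      simp [← h0]
    · set t := Real.sqrt (∑ i, (w i)^2) with ht
      have htpos : 0 < t := Real.sqrt_pos.2 hpos
      have ht2 : t^2 = ∑ i, (w i)^2 := Real.sq_sqrt hwsq
      refine ⟨fun i => ε * w i / t, ?_, ?_⟩
      · have : ∑ i, (ε * w i / t)^2 = ε^2 := by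
          have : ∑ i, (ε * w i / t)^2 = ε^2 / t^2 * ∑ i, (w i)^2 := by
            rw [Finset.mul_sum]; congr 1; ext i; field_simp
          rw [this, ht2]; field_simp
        simp only [Set.mem_setOf_eq, this]
        rw [Real.sqrt_sq hε]
      · have hsum : ∑ i, (ε * w i / t) * w i = ε * t := by
          have : ∑ i, (ε * w i / t) * w i = ε / t * ∑ i, (w i)^2 := by
            rw [Finset.mul_sum]; congr 1; ext i; field_simp
          rw [this, ← ht2]; field_simp
        simp only [hsum, zero_add]
        rw [mul_pow, ht2]; ring
  · -- upper bound
    rintro y ⟨Δ, hΔ, rfl⟩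
    simp only [Set.mem_setOf_eq] at hΔ
    have hΔsq : ∑ i, (Δ i)^2 ≤ ε^2 := by
      have h1 : (0:ℝ) ≤ ∑ i, (Δ i)^2 := Finset.sum_nonneg fun i _ => sq_nonneg _
      calc ∑ i, (Δ i)^2 = (Real.sqrt (∑ i, (Δ i)^2))^2 := (Real.sq_sqrt h1).symm
        _ ≤ ε^2 := pow_le_pow_left₀ (Real.sqrt_nonneg _) hΔ 2
    have hcs : (∑ i, Δ i * w i)^2 ≤ (∑ i, (Δ i)^2) * ∑ i, (w i)^2 :=
      Finset.sum_mul_sq_le_sq_mul_sq _ _ _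
    have : (∑ i, Δ i * w i)^2 ≤ ε^2 * ∑ i, (w i)^2 :=
      hcs.trans (mul_le_mul_of_nonneg_right hΔsq hwsq)
    simp only [zero_add]
    linarith

/-- If `w` is a standard risk minimizer (it agrees with `w*` on every coordinate
with positive variance), then its standard risk is `0` and its adversarial risk
equals `(ε²/2)‖w‖₂²`. -/
theorem risk_at_standard_minimizer (d : ℕ) (hd : 1 ≤ d)
    (σsq : Fin d → ℝ≥0) (ε : ℝ) (hε : 0 ≤ ε) (w wstar : Fin d → ℝ)
    (hmin : ∀ i, (σsq i : ℝ) * (w i - wstar i) = 0) :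
    stdRisk d σsq wstar w = 0 ∧
    advRisk d σsq wstar ε w = ε^2 / 2 * ∑ i, (w i)^2 := by
  set μ := Measure.pi fun i => gaussianReal 0 (σsq i) with hμ
  have hae : ∀ᵐ x ∂μ, ∑ i, x i * (w i - wstar i) = 0 := by
    have h : ∀ᵐ x ∂μ, ∀ i, x i * (w i - wstar i) = 0 := by
      rw [MeasureTheory.ae_all_iff]
      intro i
      rcases eq_or_ne (σsq i) 0 with h0 | h0
      · -- x i = 0 a.e.
        have hnull : μ {x : Fin d → ℝ | ¬ x i * (w i - wstar i) = 0} = 0 := by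
          have hsub : {x : Fin d → ℝ | ¬ x i * (w i - wstar i) = 0} ⊆
              Function.eval i ⁻¹' {y : ℝ | y ≠ 0} := by
            intro x hx
            simp only [Set.mem_setOf_eq] at hx ⊢
            intro h; exact hx (by simp [Function.eval] at h ⊢; simp [h])
          refine measure_mono_null hsub ?_
          refine Measure.pi_eval_preimage_null _ ?_
          rw [h0, gaussianReal_zero_var]
          simp
        exact hnull
      · have hw : w i - wstar i = 0 := by
          rcases mul_eq_zero.1 (hmin i) with h | h
          · exact absurd (by exact_mod_cast h) h0
          · exact h
        filter_upwards with x
        simp [hw]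
    filter_upwards [h] with x hx
    simp [hx]
  constructor
  · rw [stdRisk, ← hμ]
    rw [integral_congr_ae (g := fun _ => (0:ℝ))]
    · simp
    · filter_upwards [hae] with x hx
      simp [hx]
  · rw [advRisk, ← hμ]
    rw [integral_congr_ae (g := fun _ => ε^2 / 2 * ∑ i, (w i)^2)]
    · simp
    · filter_upwards [hae] with x hx
      rw [hx]
      exact (sup_helper d ε hε w).csSup_eq
end

section
/- Let Δmin, Δmax ∈ ℝ with 0 < Δmin ≤ Δmax, let Δ : ℕ → ℝ satisfy Δmin ≤ Δ(t) ≤ Δmax for all t, and let x : ℕ → ℝ satisfy x(t+1) = x(t) − sgn(x(t))·Δ(t) for all t. Then: (i) there exists t with |x(t)| ≤ Δmax; (ii) for every t, if |x(t)| ≤ Δmax then |x(t')| ≤ Δmax for all t' ≥ t; consequently there exists t such that |x(t')| ≤ Δmax for all t' ≥ t. -/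
/-- For the update `x(t+1) = x(t) − sgn(x(t))·Δ(t)` with steps in
`[Δmin, Δmax]`, `0 < Δmin`: (i) some iterate satisfies `|x(t)| ≤ Δmax`;
(ii) once `|x(t)| ≤ Δmax`, all later iterates stay `Δmax`-bounded; hence
eventually all iterates are `Δmax`-bounded. -/
theorem sign_update_enters_and_stays (Δmin Δmax : ℝ)
    (hmin : 0 < Δmin) (hle : Δmin ≤ Δmax)
    (Δ : ℕ → ℝ) (hΔ : ∀ t, Δmin ≤ Δ t ∧ Δ t ≤ Δmax)
    (x : ℕ → ℝ) (hx : ∀ t, x (t+1) = x t - Real.sign (x t) * Δ t) :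
    (∃ t, |x t| ≤ Δmax) ∧
    (∀ t, |x t| ≤ Δmax → ∀ t' ≥ t, |x t'| ≤ Δmax) ∧
    (∃ t, ∀ t' ≥ t, |x t'| ≤ Δmax) := by
  have hmax : 0 < Δmax := lt_of_lt_of_le hmin hle
  -- step preserves the bound
  have hstep : ∀ t, |x t| ≤ Δmax → |x (t+1)| ≤ Δmax := by
    intro t ht
    rcases lt_trichotomy (x t) 0 with h | h | h
    · rw [hx t, Real.sign_of_neg h]
      rw [abs_le] at ht ⊢
      constructor
      · nlinarith [(hΔ t).1, (hΔ t).2]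
      · nlinarith [(hΔ t).1, (hΔ t).2]
    · rw [hx t, h, Real.sign_zero]
      simpa using hmax.le
    · rw [hx t, Real.sign_of_pos h]
      rw [abs_le] at ht ⊢
      constructor
      · nlinarith [(hΔ t).1, (hΔ t).2]
      · nlinarith [(hΔ t).1, (hΔ t).2]
  -- if above the bound, decrease by Δmin
  have hdec : ∀ t, Δmax < |x t| → |x (t+1)| ≤ |x t| - Δmin := by
    intro t ht
    rcases lt_trichotomy (x t) 0 with h | h | h
    · rw [abs_of_neg h] at ht
      rw [hx t, Real.sign_of_neg h]
      have h1 : 0 > x t + Δ t := by nlinarith [(hΔ t).2]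
      rw [show x t - (-1) * Δ t = x t + Δ t by ring, abs_of_neg h1, abs_of_neg h]
      nlinarith [(hΔ t).1]
    · rw [h] at ht; simp at ht; linarith
    · rw [abs_of_pos h] at ht
      rw [hx t, Real.sign_of_pos h]
      have h1 : 0 < x t - Δ t := by nlinarith [(hΔ t).2]
      rw [show x t - 1 * Δ t = x t - Δ t by ring, abs_of_pos h1, abs_of_pos h]
      nlinarith [(hΔ t).1]
  -- existence
  have hex : ∃ t, |x t| ≤ Δmax := by
    by_contra hcon
    push_neg at hcon
    have hb : ∀ t : ℕ, |x t| ≤ |x 0| - t * Δmin := by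
      intro t
      induction t with
      | zero => simp
      | succ n ih =>
        have := hdec n (hcon n)
        push_cast
        linarith
    obtain ⟨n, hn⟩ := exists_nat_gt (|x 0| / Δmin)
    have := hb n
    have h2 := hcon n
    have : |x 0| < n * Δmin := by
      rw [div_lt_iff₀ hmin] at hn; linarith
    linarith [abs_nonneg (x n)]
  have hstay : ∀ t, |x t| ≤ Δmax → ∀ t' ≥ t, |x t'| ≤ Δmax := by
    intro t ht t' htt'
    obtain ⟨k, rfl⟩ := Nat.exists_eq_add_of_le htt'
    induction k with
    | zero => simpa using ht
    | succ n ih =>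
      exact hstep (t + n) (ih (Nat.le_add_right _ _))
  exact ⟨hex, hstay, hex.elim fun t ht => ⟨t, hstay t ht⟩⟩
end
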